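/- Let S ⊂ ℝⁿ be closed nonempty, and let Q_κ = Q(x_κ, r_κ) be a Whitney cube of ℝⁿ \ S with metric projection x̃_κ of x_κ onto S. Then for every c > 1 and every λ ∈ (0, 1/c), the set Q(x̃_κ, r_κ(c−1)/c) ∩ S is contained in S_{k(κ)}(λ), where k(κ) is the integer with r_κ = 2^{-k(κ)}; in particular x̃_κ ∈ S_j(λ) for every j ≥ k(κ) and every λ ∈ (0,1). -/

import Mathlib

open Metric Set MeasureTheory
open scoped ENNReal NNReal

/-- The maximal `2^{-j}`-porous subset `S_j(λ)` of `S`: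
points `x ∈ S` for which there is `y ∈ Q(x, 2^{-j})` with `Q(y, λ 2^{-j}) ⊆ ℝⁿ \ S`. -/
def porousSubset (n : ℕ) (S : Set (Fin n → ℝ)) (j : ℕ) (lam : ℝ) : Set (Fin n → ℝ) :=
  {x ∈ S | ∃ y ∈ closedBall x ((2:ℝ)^(-(j:ℤ))),
    closedBall y (lam * (2:ℝ)^(-(j:ℤ))) ⊆ Sᶜ}

/-- Let `S ⊆ ℝⁿ` be closed nonempty and `Q_κ = Q(x_κ, r_κ)` a Whitney
cube of `ℝⁿ \ S` (so `Q_κ ⊆ ℝⁿ \ S` and `diam Q_κ ≤ dist(Q_κ, S) ≤ 4 diam Q_κ`) with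
`r_κ = 2^{-k(κ)}`, and let `x̃_κ` be a sup-norm metric projection of `x_κ` onto `S`.
Then for every `c > 1` and every `λ ∈ (0, 1/c)`,
`Q(x̃_κ, r_κ(c−1)/c) ∩ S ⊆ S_{k(κ)}(λ)`; in particular `x̃_κ ∈ S_j(λ)` for every
`j ≥ k(κ)` and every `λ ∈ (0,1)`. -/
theorem statement17 (n : ℕ) (S : Set (Fin n → ℝ)) (hS : IsClosed S) (hne : S.Nonempty)
    (xc : Fin n → ℝ) (k : ℕ)
    (hQ : closedBall xc ((2:ℝ)^(-(k:ℤ))) ⊆ Sᶜ)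
    (hlow : ∀ a ∈ closedBall xc ((2:ℝ)^(-(k:ℤ))),
      2 * (2:ℝ)^(-(k:ℤ)) ≤ Metric.infDist a S)
    (hupp : ∃ a ∈ closedBall xc ((2:ℝ)^(-(k:ℤ))),
      Metric.infDist a S ≤ 8 * (2:ℝ)^(-(k:ℤ)))
    (xt : Fin n → ℝ) (hxtS : xt ∈ S) (hproj : dist xc xt = Metric.infDist xc S) :
    (∀ c : ℝ, 1 < c → ∀ lam : ℝ, 0 < lam → lam < 1/c →
      closedBall xt ((2:ℝ)^(-(k:ℤ)) * (c-1)/c) ∩ S ⊆ porousSubset n S k lam) ∧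
    (∀ j : ℕ, k ≤ j → ∀ lam : ℝ, 0 < lam → lam < 1 → xt ∈ porousSubset n S j lam) := by
  have hrpos : (0:ℝ) < (2:ℝ)^(-(k:ℤ)) := by positivity
  set r : ℝ := (2:ℝ)^(-(k:ℤ)) with hrdef
  set D : ℝ := dist xc xt with hDdef
  have hD2r : 2 * r ≤ D := by
    have h := hlow xc (mem_closedBall_self hrpos.le)
    calc 2 * r ≤ infDist xc S := h
      _ = D := hproj.symm
  have hDpos : 0 < D := lt_of_lt_of_le (by linarith) hD2r
  -- key construction
  have key : ∀ s : ℝ, 0 < s → s ≤ D → ∃ y : Fin n → ℝ, dist xt y = s ∧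
      ∀ t : ℝ, t < s → closedBall y t ⊆ Sᶜ := by
    intro s hs hsD
    refine ⟨xt + (s/D) • (xc - xt), ?_, ?_⟩
    · rw [dist_self_add_right, norm_smul, Real.norm_eq_abs,
        abs_of_pos (div_pos hs hDpos), ← dist_eq_norm]
      exact div_mul_cancel₀ s hDpos.ne'
    · intro t ht w hw hwS
      have hxcy : dist xc (xt + (s/D) • (xc - xt)) = D - s := by
        have h1 : xc - (xt + (s/D) • (xc - xt)) = (1 - s/D) • (xc - xt) := by
          rw [sub_smul, one_smul]; abel
        rw [dist_eq_norm, h1, norm_smul, Real.norm_eq_abs,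
          abs_of_nonneg (by rw [sub_nonneg]; exact div_le_one_of_le₀ hsD hDpos.le),
          ← dist_eq_norm]
        field_simp
        rw [← hDdef]; ring
      have hz : D ≤ dist xc w :=
        hproj.trans_le (Metric.infDist_le_dist_of_mem hwS)
      have htri : dist xc w ≤ dist xc (xt + (s/D) • (xc - xt)) +
          dist (xt + (s/D) • (xc - xt)) w := dist_triangle _ _ _
      have hyw : dist (xt + (s/D) • (xc - xt)) w ≤ t := by
        rw [dist_comm]; exact mem_closedBall.mp hw
      linarith
  constructor
  · intro c hc lam hlam hlamc x hx
    obtain ⟨hx1, hx2⟩ := hx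
    have hcpos : 0 < c := by linarith
    have hsle : r / c ≤ D := by
      have : r / c ≤ r := by
        rw [div_le_iff₀ hcpos]; nlinarith
      linarith
    obtain ⟨y, hy1, hy2⟩ := key (r / c) (div_pos hrpos hcpos) hsle
    refine ⟨hx2, y, ?_, hy2 (lam * r) ?_⟩
    · have hxxt : dist x xt ≤ r * (c-1)/c := mem_closedBall.mp hx1
      have htri : dist x y ≤ dist x xt + dist xt y := dist_triangle _ _ _
      rw [hy1] at htri
      rw [mem_closedBall']
      have hre : r * (c-1)/c + r/c = r := by field_simp; ring
      linarith [hrdef]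
    · calc lam * r < (1/c) * r := by nlinarith
        _ = r / c := by ring
  · intro j hj lam hlam hlam1
    set s : ℝ := (2:ℝ)^(-(j:ℤ)) with hsdef
    have hspos : 0 < s := by positivity
    have hsr : s ≤ r := by
      rw [hsdef, hrdef]
      exact zpow_le_zpow_right₀ (by norm_num)
        (neg_le_neg (by exact_mod_cast hj))
    obtain ⟨y, hy1, hy2⟩ := key s hspos (by linarith)
    exact ⟨hxtS, y, by rw [mem_closedBall']; exact le_of_eq hy1, hy2 (lam * s) (by nlinarith)⟩
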